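/- For every integer n ≥ 2 there exists a cake-division instance with 2n−2 agents and 2 cakes, each cut into n slices, in which no set of n agents is placatable. -/

import Mathlib

/-- The space of partitions of `d` cakes, cake `t` being cut into `a t` slices:
each coordinate lies in the standard simplex. -/
def PartitionSpace (d : ℕ) (a : Fin d → ℕ) : Set (∀ t, Fin (a t) → ℝ) :=
  {P | ∀ t, P t ∈ stdSimplex ℝ (Fin (a t))}

/-- A cake-division instance with `n` agents and `d` cakes, cake `t` cut into
`a t` slices: for each agent `i` and index vector `j`, a set `A i j ⊆ 𝒫` of
partitions in which agent `i` accepts the `d`-tuple of slices indexed by `j`.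
The sets are closed and the hungry-agents condition holds. -/
structure CakeInstance (n d : ℕ) (a : Fin d → ℕ) where
  A : Fin n → (∀ t, Fin (a t)) → Set (∀ t, Fin (a t) → ℝ)
  subset_partitionSpace : ∀ i j, A i j ⊆ PartitionSpace d a
  isClosed : ∀ i j, IsClosed (A i j)
  hungry : ∀ i, ∀ P ∈ PartitionSpace d a, ∃ j : ∀ t, Fin (a t),
    P ∈ A i j ∧ ∀ t, 0 < P t (j t)

/-- A set `Q` of agents is placatable: there exist a partition `P` and index
vectors, one acceptable at `P` for each agent of `Q`, such that the index
vectors of distinct agents of `Q` differ in every coordinate. -/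
def Placatable {n d : ℕ} {a : Fin d → ℕ} (C : CakeInstance n d a)
    (Q : Finset (Fin n)) : Prop :=
  ∃ P ∈ PartitionSpace d a, ∃ φ : Fin n → ∀ t, Fin (a t),
    (∀ q ∈ Q, P ∈ C.A q (φ q)) ∧
    ∀ q ∈ Q, ∀ q' ∈ Q, q ≠ q' → ∀ t, φ q t ≠ φ q' t

private lemma sum_reindex_univ {n m : ℕ} {M : Type*} [AddCommMonoid M]
    (Q : Finset (Fin m)) (hQ : Q.card = n) (ψ : Fin m → Fin n)
    (hinj : ∀ q ∈ Q, ∀ q' ∈ Q, ψ q = ψ q' → q = q') (f : Fin n → M) :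
    ∑ q ∈ Q, f (ψ q) = ∑ x : Fin n, f x := by
  have himg : Q.image ψ = Finset.univ := by
    apply Finset.eq_univ_of_card
    rw [Finset.card_image_of_injOn fun a ha b hb h => hinj a ha b hb h, hQ, Fintype.card_fin]
  rw [← himg, Finset.sum_image hinj]

/-- For `n ≥ 2` there is a cake-division instance with `2n-2` agents and `2`
cakes, each cut into `n` slices, in which no set of `n` agents is placatable. -/
theorem ad_upper_2n2_n_n (n : ℕ) (hn : 2 ≤ n) :
    ∃ C : CakeInstance (2 * n - 2) 2 (fun _ => n),
      ∀ Q : Finset (Fin (2 * n - 2)), Q.card = n → ¬ Placatable C Q := by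
  have hn0 : 0 < n := by omega
  have hnR : (0:ℝ) < n := by exact_mod_cast hn0
  have hnR2 : (2:ℝ) ≤ n := by exact_mod_cast hn
  have hFinNE : Nonempty (Fin n) := ⟨⟨0, hn0⟩⟩
  set ε : ℝ := 1 / (2 * (n:ℝ)^3) with hεdef
  have hεpos : 0 < ε := by positivity
  set δ : ℝ := 1 / (2 * (n:ℝ)) with hδdef
  have hδpos : 0 < δ := by positivity
  have hδle : δ ≤ 1/(n:ℝ) := by
    rw [hδdef]
    apply one_div_le_one_div_of_le hnR
    linarith
  set τ : Fin (2*n-2) → ℕ := fun i => if (i:ℕ) < n - 1 then 0 else 1 with hτdef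
  have hτ01 : ∀ i, τ i ≤ 1 := by
    intro i; simp only [hτdef]; split <;> omega
  set D : Fin (2*n-2) → (∀ _ : Fin 2, Fin n) → ℕ :=
    fun i j => ((j 1 : ℕ) + 2*n - (j 0 : ℕ) - τ i) % n with hDdef
  have hDlt : ∀ i j, D i j < n := fun i j => Nat.mod_lt _ hn0
  set A : Fin (2*n-2) → (∀ _ : Fin 2, Fin n) → Set (∀ _ : Fin 2, Fin n → ℝ) :=
    fun i j => {P | P ∈ PartitionSpace 2 (fun _ => n) ∧
      (2/(n:ℝ) + ε * (D i j : ℝ) ≤ P 0 (j 0) + P 1 (j 1) ∧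
      δ ≤ P 0 (j 0) ∧ δ ≤ P 1 (j 1))} with hAdef
  -- closedness
  have hPSclosed : IsClosed (PartitionSpace 2 (fun _ => n)) := by
    have heq : PartitionSpace 2 (fun _ => n)
        = ⋂ t : Fin 2, (fun P : ∀ _ : Fin 2, Fin n → ℝ => P t) ⁻¹' stdSimplex ℝ (Fin n) := by
      ext P; simp [PartitionSpace, Set.mem_iInter]
    rw [heq]
    exact isClosed_iInter fun t => (isClosed_stdSimplex ℝ (Fin n)).preimage (continuous_apply t)
  have hAclosed : ∀ i j, IsClosed (A i j) := by
    intro i j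
    have c0 : Continuous fun P : ∀ _ : Fin 2, Fin n → ℝ => P 0 (j 0) :=
      (continuous_apply (j 0)).comp (continuous_apply 0)
    have c1 : Continuous fun P : ∀ _ : Fin 2, Fin n → ℝ => P 1 (j 1) :=
      (continuous_apply (j 1)).comp (continuous_apply 1)
    have h1 : IsClosed {P : ∀ _ : Fin 2, Fin n → ℝ |
        2/(n:ℝ) + ε * (D i j : ℝ) ≤ P 0 (j 0) + P 1 (j 1)} :=
      isClosed_le continuous_const (c0.add c1)
    have h2 : IsClosed {P : ∀ _ : Fin 2, Fin n → ℝ | δ ≤ P 0 (j 0)} :=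
      isClosed_le continuous_const c0
    have h3 : IsClosed {P : ∀ _ : Fin 2, Fin n → ℝ | δ ≤ P 1 (j 1)} :=
      isClosed_le continuous_const c1
    exact hPSclosed.inter (h1.inter (h2.inter h3))
  -- hungriness
  have hhungry : ∀ i, ∀ P ∈ PartitionSpace 2 (fun _ => n), ∃ j : ∀ _ : Fin 2, Fin n,
      P ∈ A i j ∧ ∀ t, 0 < P t (j t) := by
    intro i P hP
    have hsum : ∀ t : Fin 2, ∑ x : Fin n, P t x = 1 := fun t => (hP t).2
    have hge : ∀ (t : Fin 2) (m : Fin n), (∀ x, P t x ≤ P t m) → 1/(n:ℝ) ≤ P t m := by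
      intro t m hm
      have hb : ∑ x : Fin n, P t x ≤ (Finset.univ : Finset (Fin n)).card • P t m :=
        Finset.sum_le_card_nsmul _ _ _ (fun x _ => hm x)
      rw [hsum t, Finset.card_univ, Fintype.card_fin, nsmul_eq_mul] at hb
      rw [div_le_iff₀ hnR]
      linarith [hb]
    obtain ⟨m0, -, hm0⟩ := Finset.exists_max_image Finset.univ (P 0) Finset.univ_nonempty
    obtain ⟨m1, -, hm1⟩ := Finset.exists_max_image Finset.univ (P 1) Finset.univ_nonempty
    have hm0' : ∀ x, P 0 x ≤ P 0 m0 := fun x => hm0 x (Finset.mem_univ x)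
    have hm1' : ∀ x, P 1 x ≤ P 1 m1 := fun x => hm1 x (Finset.mem_univ x)
    have hge0 : 1/(n:ℝ) ≤ P 0 m0 := hge 0 m0 hm0'
    have hge1 : 1/(n:ℝ) ≤ P 1 m1 := hge 1 m1 hm1'
    by_cases hcase : 2/(n:ℝ) + ε * n ≤ P 0 m0 + P 1 m1
    · -- far from uniform: take the pair of maxima
      refine ⟨![m0, m1], ⟨hP, ?_, ?_, ?_⟩, ?_⟩
      · have hd : (D i ![m0, m1] : ℝ) ≤ (n:ℝ) := by
          exact_mod_cast (hDlt i ![m0, m1]).le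
        have hd2 : ε * (D i ![m0, m1] : ℝ) ≤ ε * n :=
          mul_le_mul_of_nonneg_left hd hεpos.le
        simp only [Matrix.cons_val_zero, Matrix.cons_val_one, Matrix.head_cons]
        linarith
      · simp only [Matrix.cons_val_zero]; linarith
      · simp only [Matrix.cons_val_one, Matrix.head_cons, Matrix.cons_val_zero]; linarith
      · rw [Fin.forall_fin_two]
        simp only [Matrix.cons_val_zero, Matrix.cons_val_one, Matrix.head_cons]
        constructor <;> linarith
    · -- near-uniform case: every slice has size at least δ
      push_neg at hcase
      have h2n : 2/(n:ℝ) = 1/(n:ℝ) + 1/(n:ℝ) := by ring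
      have hb0 : P 0 m0 < 1/(n:ℝ) + ε * n := by linarith
      have hb1 : P 1 m1 < 1/(n:ℝ) + ε * n := by linarith
      have hnum : δ ≤ 1 - ((n:ℝ)-1) * (1/(n:ℝ) + ε * n) := by
        rw [hδdef, hεdef]
        rw [div_le_iff₀ (by positivity : (0:ℝ) < 2*(n:ℝ))]
        have hkey : (1 - ((n:ℝ)-1) * (1/(n:ℝ) + 1/(2*(n:ℝ)^3) * (n:ℝ))) * (2*(n:ℝ))
            = 2 - ((n:ℝ)-1)/(n:ℝ) := by
          field_simp
          ring
        rw [hkey]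
        have hfr : ((n:ℝ)-1)/(n:ℝ) ≤ 1 := by
          rw [div_le_one hnR]
          linarith
        linarith
      have hslice : ∀ (t : Fin 2) (m : Fin n), (∀ x, P t x ≤ P t m) →
          P t m < 1/(n:ℝ) + ε * n → ∀ x, δ ≤ P t x := by
        intro t m hm hlt x
        have h1 : P t x + ∑ y ∈ Finset.univ.erase x, P t y = 1 := by
          rw [Finset.add_sum_erase _ _ (Finset.mem_univ x)]; exact hsum t
        have h2 : ∑ y ∈ Finset.univ.erase x, P t y ≤ ((n-1 : ℕ):ℝ) * P t m := by
          have h := Finset.sum_le_card_nsmul (Finset.univ.erase x) (P t) (P t m)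
            (fun y _ => hm y)
          rwa [Finset.card_erase_of_mem (Finset.mem_univ x), Finset.card_univ,
            Fintype.card_fin, nsmul_eq_mul] at h
        have hc : ((n-1:ℕ):ℝ) = (n:ℝ) - 1 := by
          push_cast [Nat.cast_sub hn0]
          ring
        rw [hc] at h2
        have hn1 : (0:ℝ) ≤ (n:ℝ) - 1 := by linarith
        nlinarith [mul_le_mul_of_nonneg_left hlt.le hn1]
      have hs0 : ∀ x, δ ≤ P 0 x := hslice 0 m0 hm0' hb0
      have hs1 : ∀ x, δ ≤ P 1 x := hslice 1 m1 hm1' hb1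
      -- find a good pair on the shift τ i
      set t₀ := τ i with ht₀
      have ht01 : t₀ ≤ 1 := hτ01 i
      set k : Fin n → Fin n := fun j => ⟨((j:ℕ) + t₀) % n, Nat.mod_lt _ hn0⟩ with hkdef
      have hkinj : Function.Injective k := by
        intro a b hab
        have hmodeq : ((a:ℕ) + t₀) % n = ((b:ℕ) + t₀) % n := by
          simpa [hkdef, Fin.ext_iff] using hab
        have hdvd : (n:ℤ) ∣ ((b:ℕ) + t₀ : ℤ) - ((a:ℕ) + t₀ : ℤ) := by
          have hme : ((a:ℕ) + t₀) ≡ ((b:ℕ) + t₀) [MOD n] := hmodeq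
          exact_mod_cast Nat.modEq_iff_dvd.mp hme
        have ha := a.isLt; have hb := b.isLt
        have habs : |((b:ℕ) + t₀ : ℤ) - ((a:ℕ) + t₀ : ℤ)| < (n:ℤ) := by
          rw [abs_lt]
          constructor <;> push_cast <;> omega
        have hz := Int.eq_zero_of_abs_lt_dvd hdvd habs
        have hab' : (a:ℕ) = (b:ℕ) := by omega
        exact Fin.ext hab'
      have hsum2 : ∑ j : Fin n, (P 0 j + P 1 (k j)) = 2 := by
        rw [Finset.sum_add_distrib, hsum 0,
          Fintype.sum_bijective k ((Finite.injective_iff_bijective).mp hkinj)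
            (fun j => P 1 (k j)) (P 1) (fun x => rfl), hsum 1]
        norm_num
      have hex : ∃ j : Fin n, 2/(n:ℝ) ≤ P 0 j + P 1 (k j) := by
        by_contra hcon
        push_neg at hcon
        have hlt := Finset.sum_lt_sum_of_nonempty (Finset.univ_nonempty (α := Fin n))
          (fun j _ => hcon j)
        rw [hsum2, Finset.sum_const, Finset.card_univ, Fintype.card_fin, nsmul_eq_mul] at hlt
        have hid : (n:ℝ) * (2/(n:ℝ)) = 2 := by field_simp
        linarith
      obtain ⟨j₀, hj₀⟩ := hex
      have hD0 : D i ![j₀, k j₀] = 0 := by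
        simp only [hDdef, Matrix.cons_val_one, Matrix.head_cons, Matrix.cons_val_zero]
        have hkval : (k j₀ : ℕ) = ((j₀:ℕ) + t₀) % n := rfl
        set r := ((j₀:ℕ) + t₀) % n with hrdef
        have hrlt : r < n := Nat.mod_lt _ hn0
        have hjlt := j₀.isLt
        have hXeq : (k j₀ : ℕ) + 2*n - (j₀:ℕ) - t₀ = r + 2*n - ((j₀:ℕ) + t₀) := by
          rw [hkval]; omega
        rw [hXeq]
        have hle : (j₀:ℕ) + t₀ ≤ r + 2*n := by omega
        have hme : ((j₀:ℕ) + t₀) ≡ r [MOD n] := by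
          show ((j₀:ℕ) + t₀) % n = r % n
          rw [Nat.mod_eq_of_lt hrlt]
        have h2 : (n:ℤ) ∣ (r:ℤ) - ((j₀:ℕ) + t₀:ℤ) := by
          exact_mod_cast Nat.modEq_iff_dvd.mp hme
        have hdvdZ : (n:ℤ) ∣ ((r:ℤ) + 2*(n:ℤ) - ((j₀:ℕ) + t₀ : ℤ)) := by
          have hre : ((r:ℤ) + 2*(n:ℤ) - ((j₀:ℕ) + t₀ : ℤ))
              = ((r:ℤ) - ((j₀:ℕ) + t₀:ℤ)) + 2*(n:ℤ) := by ring
          rw [hre]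
          exact dvd_add h2 ⟨2, by ring⟩
        have hdvdN : n ∣ (r + 2*n - ((j₀:ℕ) + t₀)) := by
          rw [← Int.natCast_dvd_natCast]
          have hcast : ((r + 2*n - ((j₀:ℕ) + t₀) : ℕ) : ℤ)
              = (r:ℤ) + 2*(n:ℤ) - ((j₀:ℕ) + t₀ : ℤ) := by
            push_cast [Nat.cast_sub hle]
            ring
          rw [hcast]
          exact hdvdZ
        exact Nat.mod_eq_zero_of_dvd hdvdN
      refine ⟨![j₀, k j₀], ⟨hP, ?_, ?_, ?_⟩, ?_⟩
      · rw [hD0]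
        simp only [Matrix.cons_val_zero, Matrix.cons_val_one, Matrix.head_cons,
          Nat.cast_zero, mul_zero, add_zero]
        exact hj₀
      · simp only [Matrix.cons_val_zero]; exact hs0 j₀
      · simp only [Matrix.cons_val_one, Matrix.head_cons]; exact hs1 (k j₀)
      · rw [Fin.forall_fin_two]
        simp only [Matrix.cons_val_zero, Matrix.cons_val_one, Matrix.head_cons]
        exact ⟨lt_of_lt_of_le hδpos (hs0 j₀), lt_of_lt_of_le hδpos (hs1 (k j₀))⟩
  refine ⟨⟨A, fun i j P hPmem => hPmem.1, hAclosed, hhungry⟩, ?_⟩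
  -- blocking: no set of n agents is placatable
  intro Q hQcard hplac
  obtain ⟨P, hP, φ, hacc, hdiff⟩ := hplac
  have hinj0 : ∀ q ∈ Q, ∀ q' ∈ Q, φ q 0 = φ q' 0 → q = q' := by
    intro q hq q' hq' h
    by_contra hne
    exact hdiff q hq q' hq' hne 0 h
  have hinj1 : ∀ q ∈ Q, ∀ q' ∈ Q, φ q 1 = φ q' 1 → q = q' := by
    intro q hq q' hq' h
    by_contra hne
    exact hdiff q hq q' hq' hne 1 h
  have hsumP : ∀ t : Fin 2, ∑ x : Fin n, P t x = 1 := fun t => (hP t).2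
  have hS0 : ∑ q ∈ Q, P 0 (φ q 0) = 1 := by
    rw [sum_reindex_univ Q hQcard _ hinj0 (P 0), hsumP 0]
  have hS1 : ∑ q ∈ Q, P 1 (φ q 1) = 1 := by
    rw [sum_reindex_univ Q hQcard _ hinj1 (P 1), hsumP 1]
  have hineq : ∀ q ∈ Q, 2/(n:ℝ) + ε * (D q (φ q) : ℝ) ≤ P 0 (φ q 0) + P 1 (φ q 1) :=
    fun q hq => (hacc q hq).2.1
  have hsumineq : ∑ q ∈ Q, (2/(n:ℝ) + ε * (D q (φ q):ℝ)) ≤ 2 := by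
    calc ∑ q ∈ Q, (2/(n:ℝ) + ε * (D q (φ q):ℝ))
        ≤ ∑ q ∈ Q, (P 0 (φ q 0) + P 1 (φ q 1)) := Finset.sum_le_sum hineq
      _ = 2 := by rw [Finset.sum_add_distrib, hS0, hS1]; norm_num
  rw [Finset.sum_add_distrib, Finset.sum_const, hQcard, ← Finset.mul_sum] at hsumineq
  have h2 : (n:ℕ) • (2/(n:ℝ)) = 2 := by
    rw [nsmul_eq_mul]; field_simp
  rw [h2] at hsumineq
  have hDsum : ∑ q ∈ Q, (D q (φ q) : ℝ) ≤ 0 := by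
    by_contra hpos
    push_neg at hpos
    nlinarith
  have hnn : ∀ q ∈ Q, (0:ℝ) ≤ (D q (φ q):ℝ) := fun q _ => Nat.cast_nonneg _
  have hDzero : ∀ q ∈ Q, D q (φ q) = 0 := by
    have hsz : ∑ q ∈ Q, (D q (φ q):ℝ) = 0 :=
      le_antisymm hDsum (Finset.sum_nonneg hnn)
    intro q hq
    have hzq := (Finset.sum_eq_zero_iff_of_nonneg hnn).mp hsz q hq
    exact_mod_cast hzq
  -- each selected pair lies on the shift of its agent's type
  have hcong : ∀ q ∈ Q, (n:ℤ) ∣ (((φ q 1 : Fin n) : ℕ) : ℤ) - (((φ q 0 : Fin n):ℕ):ℤ) - (τ q:ℤ) := by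
    intro q hq
    have h0 : ((φ q 1 : ℕ) + 2*n - (φ q 0:ℕ) - τ q) % n = 0 := hDzero q hq
    have hdvd : n ∣ ((φ q 1 : ℕ) + 2*n - (φ q 0:ℕ) - τ q) := Nat.dvd_of_mod_eq_zero h0
    have hj0lt : ((φ q 0 : Fin n) : ℕ) < n := (φ q 0).isLt
    have hj1lt : ((φ q 1 : Fin n) : ℕ) < n := (φ q 1).isLt
    have hτq := hτ01 q
    have hXX : ((φ q 1 : ℕ) + 2*n - (φ q 0:ℕ) - τ q)
        = ((φ q 1:ℕ) + 2*n) - ((φ q 0:ℕ) + τ q) := by omega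
    rw [hXX] at hdvd
    have hle : (φ q 0:ℕ) + τ q ≤ (φ q 1:ℕ) + 2*n := by omega
    have hcast : ((((φ q 1:ℕ) + 2*n) - ((φ q 0:ℕ) + τ q) : ℕ) : ℤ)
        = ((φ q 1:ℕ):ℤ) + 2*(n:ℤ) - (((φ q 0:ℕ):ℤ) + (τ q:ℤ)) := by
      push_cast [Nat.cast_sub hle]
      ring
    have hdz : (n:ℤ) ∣ ((φ q 1:ℕ):ℤ) + 2*(n:ℤ) - (((φ q 0:ℕ):ℤ) + (τ q:ℤ)) := by
      rw [← hcast]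
      exact_mod_cast hdvd
    have hre : ((φ q 1:ℕ):ℤ) - ((φ q 0:ℕ):ℤ) - (τ q:ℤ)
        = (((φ q 1:ℕ):ℤ) + 2*(n:ℤ) - (((φ q 0:ℕ):ℤ) + (τ q:ℤ))) - 2*(n:ℤ) := by ring
    rw [hre]
    exact dvd_sub hdz ⟨2, by ring⟩
  have hsubsum : (n:ℤ) ∣ ∑ q ∈ Q, ((((φ q 1:Fin n):ℕ):ℤ) - (((φ q 0:Fin n):ℕ):ℤ) - (τ q:ℤ)) :=
    Finset.dvd_sum hcong
  have hsplit : ∑ q ∈ Q, ((((φ q 1:Fin n):ℕ):ℤ) - (((φ q 0:Fin n):ℕ):ℤ) - (τ q:ℤ))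
      = (∑ q ∈ Q, (((φ q 1:Fin n):ℕ):ℤ)) - (∑ q ∈ Q, (((φ q 0:Fin n):ℕ):ℤ))
        - (∑ q ∈ Q, (τ q:ℤ)) := by
    rw [Finset.sum_sub_distrib, Finset.sum_sub_distrib]
  have hA1 : ∑ q ∈ Q, (((φ q 1:Fin n):ℕ):ℤ) = ∑ x : Fin n, ((x:ℕ):ℤ) :=
    sum_reindex_univ Q hQcard _ hinj1 (fun x : Fin n => ((x:ℕ):ℤ))
  have hA0 : ∑ q ∈ Q, (((φ q 0:Fin n):ℕ):ℤ) = ∑ x : Fin n, ((x:ℕ):ℤ) :=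
    sum_reindex_univ Q hQcard _ hinj0 (fun x : Fin n => ((x:ℕ):ℤ))
  rw [hsplit, hA1, hA0] at hsubsum
  have hfin : (n:ℤ) ∣ (∑ q ∈ Q, (τ q:ℤ)) := by
    have hre : (∑ x : Fin n, ((x:ℕ):ℤ)) - (∑ x : Fin n, ((x:ℕ):ℤ)) - (∑ q ∈ Q, (τ q:ℤ))
        = -(∑ q ∈ Q, (τ q:ℤ)) := by ring
    rw [hre] at hsubsum
    exact (dvd_neg.mp hsubsum)
  set y := ∑ q ∈ Q, τ q with hydef
  have hyz : (∑ q ∈ Q, (τ q:ℤ)) = (y:ℤ) := by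
    rw [hydef]; push_cast; ring
  rw [hyz] at hfin
  have hdvdy : n ∣ y := by exact_mod_cast hfin
  -- y is the number of type-1 agents in Q : between 1 and n-1
  have hy_le : y ≤ n - 1 := by
    set T1 : Finset (Fin (2*n-2)) := Q.filter (fun q => n - 1 ≤ (q:ℕ)) with hT1
    have hzero : ∀ q ∈ Q, q ∉ T1 → τ q = 0 := by
      intro q hq hqn
      simp only [hT1, Finset.mem_filter] at hqn
      have hlt : (q:ℕ) < n - 1 := by
        by_contra h
        exact hqn ⟨hq, by omega⟩
      simp only [hτdef, if_pos hlt]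
    have hsub : ∑ q ∈ T1, τ q = y := by
      rw [hydef]
      exact Finset.sum_subset (Finset.filter_subset _ _) hzero
    have hbd : ∑ q ∈ T1, τ q ≤ T1.card • 1 :=
      Finset.sum_le_card_nsmul _ _ _ (fun q _ => hτ01 q)
    rw [smul_eq_mul, mul_one] at hbd
    have hT1card : T1.card ≤ n - 1 := by
      have h := Finset.card_le_card_of_injOn (s := T1) (fun q : Fin (2*n-2) => (q:ℕ) - (n-1))
        (t := Finset.range (n-1))
        (by
          intro q hq
          have hq' : q ∈ Q ∧ n - 1 ≤ (q:ℕ) := by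
            simpa [hT1, Finset.mem_filter] using hq
          have := q.isLt
          simp only [Finset.mem_coe, Finset.mem_range]
          omega)
        (by
          intro a ha b hb hab
          have ha' : a ∈ Q ∧ n - 1 ≤ (a:ℕ) := by
            simpa [hT1, Finset.mem_filter] using ha
          have hb' : b ∈ Q ∧ n - 1 ≤ (b:ℕ) := by
            simpa [hT1, Finset.mem_filter] using hb
          have h1 := a.isLt; have h2 := b.isLt
          have hab' : (a:ℕ) - (n-1) = (b:ℕ) - (n-1) := hab
          apply Fin.ext
          omega)
      simpa using h
    omega
  have hy_ge : 1 ≤ y := by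
    by_contra hy0
    have hy0' : y = 0 := by omega
    have hall : ∀ q ∈ Q, (q:ℕ) < n - 1 := by
      intro q hq
      have hτ0 : τ q = 0 := by
        have hz := (Finset.sum_eq_zero_iff (s := Q) (f := τ)).mp (hydef ▸ hy0') q hq
        exact hz
      simp only [hτdef] at hτ0
      by_contra h
      rw [if_neg h] at hτ0
      exact one_ne_zero hτ0
    have hQle : Q.card ≤ n - 1 := by
      have h := Finset.card_le_card_of_injOn (s := Q) (fun q : Fin (2*n-2) => (q:ℕ))
        (t := Finset.range (n-1))
        (by
          intro q hq
          simp only [Finset.mem_coe, Finset.mem_range]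
          exact hall q hq)
        (by
          intro a ha b hb hab
          exact Fin.ext hab)
      simpa using h
    omega
  have hnley := Nat.le_of_dvd (by omega) hdvdy
  omega
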